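/- Let d > 0, μ > 0, L > 0, α, β > 0 with α + β > 0, and 0 < d < π/2. For every positive integer n, writing X = dn/μ and x₀ = d/μ, one has (4L/(π²dμ·cos^{α+β}((π/2)·sin d)·cos d)) · e^{−πμ·p(X)}/(1 − e^{−2πμ·p(X)}) ≤ (4L/(π²dμ·cos^{α+β}((π/2)·sin d)·cos d)) · ( e^{−πμ(p(x₀)−q(x₀))}/(1 − e^{−2πμ·p(x₀)}) ) · e^{−πμ·q(X)}; that is, e^{−πμ·p(X)}/(1 − e^{−2πμ·p(X)}) ≤ e^{−πμ(p(x₀)−q(x₀))} · e^{−πμ·q(X)}/(1 − e^{−2πμ·p(x₀)}) for all X ≥ x₀ > 0. -/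

import Mathlib

open Real

/-- `q(x) = x / arsinh x`. -/
noncomputable def qf (x : ℝ) : ℝ := x / Real.arsinh x

/-- `p(x) = x / arsinh (x / arsinh x)`. -/
noncomputable def pf (x : ℝ) : ℝ := x / Real.arsinh (x / Real.arsinh x)

-- sinh t ≤ t * cosh t for t ≥ 0
lemma sinh_le_mul_cosh {t : ℝ} (ht : 0 ≤ t) : Real.sinh t ≤ t * Real.cosh t := by
  have key : ∀ u : ℝ, HasDerivAt (fun y => y * Real.cosh y - Real.sinh y) (u * Real.sinh u) u := by
    intro u
    have h1 := ((hasDerivAt_id u).mul (Real.hasDerivAt_cosh u)).sub (Real.hasDerivAt_sinh u)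
    exact h1.congr_deriv (by show 1 * Real.cosh u + u * Real.sinh u - Real.cosh u = u * Real.sinh u; ring)
  have mono : MonotoneOn (fun y => y * Real.cosh y - Real.sinh y) (Set.Ici 0) := by
    apply monotoneOn_of_deriv_nonneg (convex_Ici 0)
    · exact fun u _ => (key u).continuousAt.continuousWithinAt
    · exact fun u _ => (key u).differentiableAt.differentiableWithinAt
    · intro u hu
      rw [interior_Ici, Set.mem_Ioi] at hu
      rw [(key u).deriv]
      have : 0 ≤ Real.sinh u := by rw [← Real.sinh_zero]; exact Real.sinh_le_sinh.2 hu.le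
      exact mul_nonneg hu.le this
  have h := mono (Set.self_mem_Ici) (Set.mem_Ici.2 ht) ht
  simp only [Real.cosh_zero, Real.sinh_zero, zero_mul, sub_zero, sub_self] at h
  linarith [h]

-- t * cosh t ≤ (t+1) * sinh t for t ≥ 0
lemma mul_cosh_le {t : ℝ} (ht : 0 ≤ t) : t * Real.cosh t ≤ (t + 1) * Real.sinh t := by
  rw [Real.cosh_eq, Real.sinh_eq]
  have h1 : Real.exp t * Real.exp (-t) = 1 := by rw [← Real.exp_add]; simp
  have h2 : 1 + 2 * t ≤ Real.exp t * Real.exp t := by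
    have := Real.add_one_le_exp (2 * t)
    rw [← Real.exp_add] at h1
    calc 1 + 2*t ≤ Real.exp (2*t) := by linarith
    _ = Real.exp t * Real.exp t := by rw [← Real.exp_add]; ring_nf
  nlinarith [Real.exp_pos t, Real.exp_pos (-t)]

lemma arsinh_le_self {x : ℝ} (hx : 0 ≤ x) : Real.arsinh x ≤ x := by
  calc Real.arsinh x ≤ Real.arsinh (Real.sinh x) :=
        Real.arsinh_le_arsinh.2 (by simpa using hx)
  _ = x := Real.arsinh_sinh x

-- x ≤ arsinh x * √(1+x²)
lemma self_le_arsinh_mul {x : ℝ} (hx : 0 ≤ x) :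
    x ≤ Real.arsinh x * Real.sqrt (1 + x ^ 2) := by
  have h := sinh_le_mul_cosh (t := Real.arsinh x) (by rwa [Real.arsinh_nonneg_iff])
  rwa [Real.sinh_arsinh, Real.cosh_arsinh] at h

-- arsinh x * √(1+x²) ≤ x * (arsinh x + 1)
lemma arsinh_mul_le {x : ℝ} (hx : 0 ≤ x) :
    Real.arsinh x * Real.sqrt (1 + x ^ 2) ≤ x * (Real.arsinh x + 1) := by
  have h := mul_cosh_le (t := Real.arsinh x) (by rwa [Real.arsinh_nonneg_iff])
  rw [Real.sinh_arsinh, Real.cosh_arsinh] at h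
  linarith [h]

-- sinh s ≤ s * sinh 1 for 0 ≤ s ≤ 1
lemma sinh_le_smul {s : ℝ} (h0 : 0 ≤ s) (h1 : s ≤ 1) : Real.sinh s ≤ s * Real.sinh 1 := by
  have hadd : Real.sinh 1 = Real.sinh s * Real.cosh (1 - s) + Real.cosh s * Real.sinh (1 - s) := by
    rw [← Real.sinh_add]; norm_num
  have hc1 : (1 : ℝ) ≤ Real.cosh (1 - s) := Real.one_le_cosh _
  have hs1 : 1 - s ≤ Real.sinh (1 - s) := (Real.self_le_sinh_iff (x := 1 - s)).2 (by linarith)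
  have hcs : 0 < Real.cosh s := Real.cosh_pos s
  have hmc : Real.sinh s ≤ s * Real.cosh s := sinh_le_mul_cosh h0
  have hsnn : 0 ≤ Real.sinh s := by rw [← Real.sinh_zero]; exact Real.sinh_le_sinh.2 h0
  nlinarith [mul_nonneg hsnn (sub_nonneg.2 hc1), mul_nonneg hcs.le (sub_nonneg.2 hs1),
    mul_nonneg (sub_nonneg.2 h1) (sub_nonneg.2 hmc)]

-- s * sinh 1 ≤ sinh s for 1 ≤ s
lemma smul_le_sinh {s : ℝ} (h1 : 1 ≤ s) : s * Real.sinh 1 ≤ Real.sinh s := by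
  have hadd : Real.sinh s = Real.sinh 1 * Real.cosh (s - 1) + Real.cosh 1 * Real.sinh (s - 1) := by
    rw [← Real.sinh_add]; norm_num
  have hc1 : (1 : ℝ) ≤ Real.cosh (s - 1) := Real.one_le_cosh _
  have hs1 : s - 1 ≤ Real.sinh (s - 1) := (Real.self_le_sinh_iff (x := s - 1)).2 (by linarith)
  have hcs : Real.sinh 1 < Real.cosh 1 := Real.sinh_lt_cosh 1
  have hsnn : 0 ≤ Real.sinh 1 := by rw [← Real.sinh_zero]; exact Real.sinh_le_sinh.2 (by norm_num)
  nlinarith [mul_nonneg hsnn (sub_nonneg.2 hc1)]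

-- arsinh (sinh 1) = 1 trick: the "A between s and 1" fact
lemma A_between {x : ℝ} (hx : 0 < x) :
    (Real.arsinh (x / Real.arsinh x) - 1) * (Real.arsinh (x / Real.arsinh x) - Real.arsinh x) ≤ 0 := by
  set s := Real.arsinh x with hs
  have hspos : 0 < s := Real.arsinh_pos_iff.2 hx
  have hxs : Real.sinh s = x := Real.sinh_arsinh x
  set A := Real.arsinh (x / s) with hA
  rcases le_total s 1 with h1 | h1
  · -- s ≤ 1 : s ≤ A ≤ 1
    have hqx : x ≤ x / s := by
      rw [le_div_iff₀ hspos]; nlinarith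
    have hsA : s ≤ A := le_trans (le_of_eq rfl) (Real.arsinh_le_arsinh.2 hqx)
    have hq1 : x / s ≤ Real.sinh 1 := by
      rw [div_le_iff₀ hspos, ← hxs]
      have := sinh_le_smul hspos.le h1
      linarith [this, mul_comm s (Real.sinh 1)]
    have hA1 : A ≤ 1 := by
      calc A ≤ Real.arsinh (Real.sinh 1) := Real.arsinh_le_arsinh.2 hq1
      _ = 1 := Real.arsinh_sinh 1
    nlinarith
  · -- 1 ≤ s : 1 ≤ A ≤ s
    have hqx : x / s ≤ x := by
      rw [div_le_iff₀ hspos]; nlinarith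
    have hsA : A ≤ s := Real.arsinh_le_arsinh.2 hqx
    have hq1 : Real.sinh 1 ≤ x / s := by
      rw [le_div_iff₀ hspos, ← hxs]
      have := smul_le_sinh h1
      linarith [mul_comm s (Real.sinh 1)]
    have hA1 : 1 ≤ A := by
      calc (1:ℝ) = Real.arsinh (Real.sinh 1) := (Real.arsinh_sinh 1).symm
      _ ≤ A := Real.arsinh_le_arsinh.2 hq1
    nlinarith

section derivs

variable {x : ℝ}

lemma hasDerivAt_qf (hx : 0 < x) :
    HasDerivAt qf ((1 * Real.arsinh x - x * (Real.sqrt (1 + x ^ 2))⁻¹) / (Real.arsinh x) ^ 2) x := by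
  have hs : Real.arsinh x ≠ 0 := (Real.arsinh_pos_iff.2 hx).ne'
  exact (hasDerivAt_id x).div (Real.hasDerivAt_arsinh x) hs

lemma hasDerivAt_pf (hx : 0 < x) :
    HasDerivAt pf
      ((1 * Real.arsinh (qf x) - x * ((Real.sqrt (1 + qf x ^ 2))⁻¹ *
        ((1 * Real.arsinh x - x * (Real.sqrt (1 + x ^ 2))⁻¹) / (Real.arsinh x) ^ 2))) /
        (Real.arsinh (qf x)) ^ 2) x := by
  have hq : 0 < qf x := div_pos hx (Real.arsinh_pos_iff.2 hx)
  have hAs : Real.arsinh (qf x) ≠ 0 := (Real.arsinh_pos_iff.2 hq).ne'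
  have hcomp : HasDerivAt (fun y => Real.arsinh (qf y))
      ((Real.sqrt (1 + qf x ^ 2))⁻¹ *
        ((1 * Real.arsinh x - x * (Real.sqrt (1 + x ^ 2))⁻¹) / (Real.arsinh x) ^ 2)) x :=
    (Real.hasDerivAt_arsinh (qf x)).comp x (hasDerivAt_qf hx)
  exact (hasDerivAt_id x).div hcomp hAs

lemma qd_nonneg (hx : 0 < x) :
    0 ≤ (1 * Real.arsinh x - x * (Real.sqrt (1 + x ^ 2))⁻¹) / (Real.arsinh x) ^ 2 := by
  set s := Real.arsinh x with hsdef
  have hs : 0 < s := Real.arsinh_pos_iff.2 hx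
  have hc : 0 < Real.sqrt (1 + x ^ 2) := Real.sqrt_pos.2 (by positivity)
  have hxc : x ≤ s * Real.sqrt (1 + x ^ 2) := self_le_arsinh_mul hx.le
  have hr : x * (Real.sqrt (1 + x ^ 2))⁻¹ ≤ s := by
    rw [mul_inv_le_iff₀ hc]; linarith [mul_comm s (Real.sqrt (1 + x ^ 2))]
  apply div_nonneg _ (by positivity)
  linarith

lemma abstract_ineq {x s c q A e : ℝ} (hx : 0 < x) (hs : 0 < s) (hc : 0 < c)
    (hA : 0 < A) (he : 0 < e) (h1 : x ≤ s * c) (h2 : s * c ≤ x * (s + 1))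
    (h3 : q * s = x) (h5 : q ≤ e) (h6 : q ≤ A * e) (h7 : (A - 1) * (A - s) ≤ 0) :
    (1 * s - x * c⁻¹) / s ^ 2 ≤
      (1 * A - x * (e⁻¹ * ((1 * s - x * c⁻¹) / s ^ 2))) / A ^ 2 ∧
    0 ≤ (1 * A - x * (e⁻¹ * ((1 * s - x * c⁻¹) / s ^ 2))) / A ^ 2 := by
  have hq : 0 < q := by nlinarith
  set r := x * c⁻¹ with hr
  have hrc : r * c = x := by rw [hr, inv_mul_cancel_right₀ hc.ne']
  have hrpos : 0 < r := by rw [hr]; positivity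
  clear_value r
  have hrs : r ≤ s := by nlinarith
  have hr1 : s ≤ r * (s + 1) := by nlinarith
  have hsr : 0 ≤ s - r := by linarith
  set w := x * (e⁻¹ * ((1 * s - r) / s ^ 2)) with hw
  have hwe : w * (e * s ^ 2) = x * (s - r) := by
    rw [hw]; field_simp
  have hwpos : 0 ≤ w := by
    rw [hw]
    exact mul_nonneg hx.le (mul_nonneg (inv_nonneg.2 he.le)
      (div_nonneg (by linarith) (by positivity)))
  clear_value w
  clear hw hr
  have hxqs : x * s = q * s ^ 2 := by rw [← h3]; ring
  have hxes : x ≤ e * s := by nlinarith [mul_le_mul_of_nonneg_right h5 hs.le]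
  have hws : w * s ≤ s - r := by
    have key : (s - r - w * s) * (e * s) = (s - r) * (e * s - x) := by
      linear_combination -hwe
    nlinarith [mul_nonneg hsr (sub_nonneg.2 hxes), mul_pos he hs, key]
  have hwA : w ≤ A := by
    have h9 : x * (s - r) ≤ A * (e * s ^ 2) := by
      nlinarith [mul_pos hx hrpos, mul_le_mul_of_nonneg_right h6 (sq_nonneg s), hxqs]
    have h10 : w * (e * s ^ 2) ≤ A * (e * s ^ 2) := by linarith [hwe]
    exact le_of_mul_le_mul_right h10 (by positivity)
  constructor
  · rw [div_le_div_iff₀ (by positivity) (by positivity)]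
    have hE : 0 ≤ (s - r) * ((A - 1) * (s - A)) + A * (r * (s + 1) - s) :=
      add_nonneg (mul_nonneg hsr (by nlinarith [h7])) (mul_nonneg hA.le (by linarith))
    have hEeq : (s - r) * ((A - 1) * (s - A)) + A * (r * (s + 1) - s) =
        s ^ 2 * A - s ^ 2 + r * s - A ^ 2 * s + A ^ 2 * r := by ring
    have hE' : 0 ≤ s ^ 2 * A - s ^ 2 + r * s - A ^ 2 * s + A ^ 2 * r := hEeq ▸ hE
    have hwss : w * s ^ 2 ≤ (s - r) * s := by
      have := mul_le_mul_of_nonneg_right hws hs.le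
      nlinarith [this]
    nlinarith [hE', hwss]
  · apply div_nonneg _ (by positivity)
    linarith

lemma pd_facts {x : ℝ} (hx : 0 < x) :
    ((1 * Real.arsinh x - x * (Real.sqrt (1 + x ^ 2))⁻¹) / (Real.arsinh x) ^ 2) ≤
      ((1 * Real.arsinh (qf x) - x * ((Real.sqrt (1 + qf x ^ 2))⁻¹ *
        ((1 * Real.arsinh x - x * (Real.sqrt (1 + x ^ 2))⁻¹) / (Real.arsinh x) ^ 2))) /
        (Real.arsinh (qf x)) ^ 2) ∧
    0 ≤ ((1 * Real.arsinh (qf x) - x * ((Real.sqrt (1 + qf x ^ 2))⁻¹ *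
        ((1 * Real.arsinh x - x * (Real.sqrt (1 + x ^ 2))⁻¹) / (Real.arsinh x) ^ 2))) /
        (Real.arsinh (qf x)) ^ 2) := by
  have hs : 0 < Real.arsinh x := Real.arsinh_pos_iff.2 hx
  have hq : 0 < qf x := div_pos hx hs
  have hA : 0 < Real.arsinh (qf x) := Real.arsinh_pos_iff.2 hq
  have h3 : qf x * Real.arsinh x = x := by unfold qf; field_simp
  have h5 : qf x ≤ Real.sqrt (1 + qf x ^ 2) := by
    rw [show (1 : ℝ) + qf x ^ 2 = qf x ^ 2 + 1 by ring]
    nlinarith [Real.sq_sqrt (show (0:ℝ) ≤ qf x ^ 2 + 1 by positivity),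
      Real.sqrt_nonneg (qf x ^ 2 + 1), hq]
  exact abstract_ineq hx hs (Real.sqrt_pos.2 (by positivity)) hA
    (Real.sqrt_pos.2 (by positivity)) (self_le_arsinh_mul hx.le) (arsinh_mul_le hx.le)
    h3 h5 (self_le_arsinh_mul hq.le) (A_between hx)

end derivs

lemma qf_pos {x : ℝ} (hx : 0 < x) : 0 < qf x := div_pos hx (Real.arsinh_pos_iff.2 hx)

lemma pf_pos {x : ℝ} (hx : 0 < x) : 0 < pf x :=
  div_pos hx (Real.arsinh_pos_iff.2 (qf_pos hx))

lemma pf_mono {a b : ℝ} (ha : 0 < a) (hab : a ≤ b) : pf a ≤ pf b := by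
  have key : MonotoneOn pf (Set.Icc a b) := by
    apply monotoneOn_of_deriv_nonneg (convex_Icc a b)
    · exact fun y hy => (hasDerivAt_pf (lt_of_lt_of_le ha hy.1)).continuousAt.continuousWithinAt
    · intro y hy
      rw [interior_Icc] at hy
      exact (hasDerivAt_pf (ha.trans hy.1)).differentiableAt.differentiableWithinAt
    · intro y hy
      rw [interior_Icc] at hy
      rw [(hasDerivAt_pf (ha.trans hy.1)).deriv]
      exact (pd_facts (ha.trans hy.1)).2
  exact key (Set.left_mem_Icc.2 hab) (Set.right_mem_Icc.2 hab) hab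

lemma pf_sub_qf_mono {a b : ℝ} (ha : 0 < a) (hab : a ≤ b) :
    pf a - qf a ≤ pf b - qf b := by
  have hder : ∀ y : ℝ, 0 < y → HasDerivAt (fun z => pf z - qf z)
      (((1 * Real.arsinh (qf y) - y * ((Real.sqrt (1 + qf y ^ 2))⁻¹ *
        ((1 * Real.arsinh y - y * (Real.sqrt (1 + y ^ 2))⁻¹) / (Real.arsinh y) ^ 2))) /
        (Real.arsinh (qf y)) ^ 2) -
       ((1 * Real.arsinh y - y * (Real.sqrt (1 + y ^ 2))⁻¹) / (Real.arsinh y) ^ 2)) y :=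
    fun y hy => (hasDerivAt_pf hy).sub (hasDerivAt_qf hy)
  have key : MonotoneOn (fun z => pf z - qf z) (Set.Icc a b) := by
    apply monotoneOn_of_deriv_nonneg (convex_Icc a b)
    · exact fun y hy => (hder y (lt_of_lt_of_le ha hy.1)).continuousAt.continuousWithinAt
    · intro y hy
      rw [interior_Icc] at hy
      exact (hder y (ha.trans hy.1)).differentiableAt.differentiableWithinAt
    · intro y hy
      rw [interior_Icc] at hy
      rw [(hder y (ha.trans hy.1)).deriv]
      have := (pd_facts (ha.trans hy.1)).1
      linarith
  exact key (Set.left_mem_Icc.2 hab) (Set.right_mem_Icc.2 hab) hab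

lemma main_part2 {μ : ℝ} (hμ : 0 < μ) (x₀ X : ℝ) (h0 : 0 < x₀) (hX : x₀ ≤ X) :
    Real.exp (-(π * μ * pf X)) / (1 - Real.exp (-(2 * π * μ * pf X))) ≤
      Real.exp (-(π * μ * (pf x₀ - qf x₀))) * Real.exp (-(π * μ * qf X)) /
        (1 - Real.exp (-(2 * π * μ * pf x₀))) := by
  have hc : 0 < π * μ := mul_pos Real.pi_pos hμ
  have hXpos : 0 < X := lt_of_lt_of_le h0 hX
  have hp0 : 0 < pf x₀ := pf_pos h0
  have hpX : pf x₀ ≤ pf X := pf_mono h0 hX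
  have hpq : pf x₀ - qf x₀ + qf X ≤ pf X := by
    have := pf_sub_qf_mono h0 hX
    linarith
  have num : Real.exp (-(π * μ * pf X)) ≤
      Real.exp (-(π * μ * (pf x₀ - qf x₀))) * Real.exp (-(π * μ * qf X)) := by
    rw [← Real.exp_add]
    apply Real.exp_le_exp.2
    nlinarith [mul_le_mul_of_nonneg_left hpq hc.le]
  have den0 : 0 < 1 - Real.exp (-(2 * π * μ * pf x₀)) := by
    have : Real.exp (-(2 * π * μ * pf x₀)) < 1 := by
      rw [Real.exp_lt_one_iff]
      nlinarith
    linarith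
  have dens : 1 - Real.exp (-(2 * π * μ * pf x₀)) ≤ 1 - Real.exp (-(2 * π * μ * pf X)) := by
    have : Real.exp (-(2 * π * μ * pf X)) ≤ Real.exp (-(2 * π * μ * pf x₀)) := by
      apply Real.exp_le_exp.2
      nlinarith
    linarith
  exact div_le_div₀ (by positivity) num den0 dens


theorem stmt15 (L α β d μ : ℝ) (hL : 0 < L) (hα : 0 < α) (hβ : 0 < β)
    (hμ : 0 < μ) (hd0 : 0 < d) (hd : d < π / 2) :
    (∀ n : ℕ, 0 < n →
      (4 * L / (π ^ 2 * d * μ * Real.cos (π / 2 * Real.sin d) ^ (α + β) * Real.cos d)) *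
          (Real.exp (-(π * μ * pf (d * n / μ))) /
            (1 - Real.exp (-(2 * π * μ * pf (d * n / μ))))) ≤
        (4 * L / (π ^ 2 * d * μ * Real.cos (π / 2 * Real.sin d) ^ (α + β) * Real.cos d)) *
          (Real.exp (-(π * μ * (pf (d / μ) - qf (d / μ)))) /
            (1 - Real.exp (-(2 * π * μ * pf (d / μ))))) *
          Real.exp (-(π * μ * qf (d * n / μ))))
    ∧ (∀ x₀ X : ℝ, 0 < x₀ → x₀ ≤ X →
        Real.exp (-(π * μ * pf X)) / (1 - Real.exp (-(2 * π * μ * pf X))) ≤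
          Real.exp (-(π * μ * (pf x₀ - qf x₀))) * Real.exp (-(π * μ * qf X)) /
            (1 - Real.exp (-(2 * π * μ * pf x₀)))) := by
  constructor
  · intro n hn
    have hx0 : 0 < d / μ := div_pos hd0 hμ
    have hn1 : (1 : ℝ) ≤ (n : ℝ) := by exact_mod_cast hn
    have hle : d / μ ≤ d * (n : ℝ) / μ := by
      gcongr
      nlinarith
    have h2 := main_part2 hμ (d / μ) (d * (n : ℝ) / μ) hx0 hle
    have hcosd : 0 ≤ Real.cos d := by
      apply Real.cos_nonneg_of_mem_Icc
      constructor <;> [linarith [Real.pi_pos]; linarith]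
    have hsin0 : 0 ≤ Real.sin d := Real.sin_nonneg_of_nonneg_of_le_pi hd0.le
      (by linarith [Real.pi_pos])
    have hsin1 : Real.sin d ≤ 1 := Real.sin_le_one d
    have hcos2 : 0 ≤ Real.cos (π / 2 * Real.sin d) := by
      apply Real.cos_nonneg_of_mem_Icc
      constructor
      · nlinarith [Real.pi_pos]
      · nlinarith [Real.pi_pos]
    have hK : 0 ≤ 4 * L / (π ^ 2 * d * μ * Real.cos (π / 2 * Real.sin d) ^ (α + β) *
        Real.cos d) := by
      apply div_nonneg (by linarith)
      have hrp : 0 ≤ Real.cos (π / 2 * Real.sin d) ^ (α + β) := Real.rpow_nonneg hcos2 _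
      positivity
    calc (4 * L / (π ^ 2 * d * μ * Real.cos (π / 2 * Real.sin d) ^ (α + β) * Real.cos d)) *
          (Real.exp (-(π * μ * pf (d * n / μ))) /
            (1 - Real.exp (-(2 * π * μ * pf (d * n / μ))))) ≤
        (4 * L / (π ^ 2 * d * μ * Real.cos (π / 2 * Real.sin d) ^ (α + β) * Real.cos d)) *
          (Real.exp (-(π * μ * (pf (d / μ) - qf (d / μ)))) * Real.exp (-(π * μ * qf (d * n / μ))) /
            (1 - Real.exp (-(2 * π * μ * pf (d / μ))))) :=
          mul_le_mul_of_nonneg_left h2 hK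
      _ = (4 * L / (π ^ 2 * d * μ * Real.cos (π / 2 * Real.sin d) ^ (α + β) * Real.cos d)) *
          (Real.exp (-(π * μ * (pf (d / μ) - qf (d / μ)))) /
            (1 - Real.exp (-(2 * π * μ * pf (d / μ))))) *
          Real.exp (-(π * μ * qf (d * n / μ))) := by ring
  · exact fun x₀ X h0 hX => main_part2 hμ x₀ X h0 hX
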